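/- Let J = [a,b] with a < b and f ∈ L²(J) with f ≥ 0 and ∫_J f^{2/3} dL¹ > 0. Then the unique minimizer of F(ρ) = (1/12) ∫_J f²/ρ² dL¹ over measurable ρ : J → (0,∞] with ∫_J ρ dL¹ = 1 is ρ = c f^{2/3} where c = (∫_J f^{2/3} dL¹)^{-1}, and the minimum value is (1/12)(∫_J f^{2/3} dL¹)³. -/

import Mathlib

open MeasureTheory

lemma aux_cube (s : ℝ) (hs : 0 ≤ s) : (s ^ ((2:ℝ)/3)) ^ (3:ℕ) = s ^ (2:ℕ) := by
  rw [← Real.rpow_natCast (s ^ ((2:ℝ)/3)) 3, ← Real.rpow_mul hs, ← Real.rpow_natCast s 2]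
  norm_num

lemma aux_ineq (I s t : ℝ) (hI : 0 < I) (hs : 0 ≤ s) (ht : 0 < t) :
    3 * I ^ 2 * s ^ ((2:ℝ)/3) ≤ s ^ 2 / t ^ 2 + 2 * I ^ 3 * t := by
  set u := s ^ ((2:ℝ)/3) with hu
  have hu0 : 0 ≤ u := Real.rpow_nonneg hs _
  have hu3 : u ^ (3:ℕ) = s ^ (2:ℕ) := aux_cube s hs
  have hid : s ^ 2 / t ^ 2 + 2*I^3*t - 3*I^2*u = (u - I*t)^2*(u + 2*I*t)/t^2 := by
    rw [← hu3]; field_simp; ring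
  nlinarith [sq_nonneg (u - I*t), mul_pos hI ht, div_nonneg (mul_nonneg (sq_nonneg (u - I*t)) (by nlinarith : (0:ℝ) ≤ u + 2*I*t)) (sq_nonneg t)]

lemma aux_eq (I s t : ℝ) (hI : 0 < I) (hs : 0 ≤ s) (ht : 0 < t)
    (h : s ^ 2 / t ^ 2 + 2 * I ^ 3 * t - 3 * I ^ 2 * s ^ ((2:ℝ)/3) = 0) :
    t = I⁻¹ * s ^ ((2:ℝ)/3) := by
  set u := s ^ ((2:ℝ)/3) with hu
  have hu0 : 0 ≤ u := Real.rpow_nonneg hs _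
  have hu3 : u ^ (3:ℕ) = s ^ (2:ℕ) := aux_cube s hs
  have hid : s ^ 2 / t ^ 2 + 2*I^3*t - 3*I^2*u = (u - I*t)^2*(u + 2*I*t)/t^2 := by
    rw [← hu3]; field_simp; ring
  have h2 : (u - I*t)^2*(u + 2*I*t) = 0 := by
    have h0 := hid.symm.trans h
    rcases div_eq_zero_iff.1 h0 with h' | h'
    · exact h'
    · exact absurd h' (by positivity)
  have h3 : u + 2*I*t > 0 := by nlinarith [mul_pos hI ht]
  have h4 : (u - I*t)^2 = 0 := by
    rcases mul_eq_zero.1 h2 with h' | h'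
    · exact h'
    · linarith
  have h5 : u = I*t := by nlinarith [sq_nonneg (u - I*t)]
  field_simp [h5]
  rw [h5]; ring

theorem stmt15 (a b : ℝ) (hab : a < b) (f : ℝ → ℝ)
    (hf : MemLp f 2 (volume.restrict (Set.Icc a b)))
    (hf0 : ∀ᵐ x ∂(volume.restrict (Set.Icc a b)), 0 ≤ f x)
    (hpos : 0 < ∫ x in Set.Icc a b, f x ^ ((2 : ℝ) / 3))
    (c : ℝ) (hc : c = (∫ x in Set.Icc a b, f x ^ ((2 : ℝ) / 3))⁻¹)
    -- F is the limit compliance functional (with values in [0,∞])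
    (F : (ℝ → ℝ) → ENNReal)
    (hF : ∀ ρ : ℝ → ℝ, F ρ =
      (1 / 12 : ENNReal) * ∫⁻ x in Set.Icc a b, ENNReal.ofReal ((f x) ^ 2 / (ρ x) ^ 2)) :
    -- ρ* = c f^{2/3} is admissible, is a minimizer, attains the claimed value,
    -- and is the unique minimizer (up to a.e. equality)
    (∫⁻ x in Set.Icc a b, ENNReal.ofReal (c * f x ^ ((2 : ℝ) / 3)) = 1) ∧
      F (fun x => c * f x ^ ((2 : ℝ) / 3)) =
        ENNReal.ofReal ((1 / 12) * (∫ x in Set.Icc a b, f x ^ ((2 : ℝ) / 3)) ^ 3) ∧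
      (∀ ρ : ℝ → ℝ, Measurable ρ → (∀ᵐ x ∂(volume.restrict (Set.Icc a b)), 0 < ρ x) →
        (∫⁻ x in Set.Icc a b, ENNReal.ofReal (ρ x)) = 1 →
        F (fun x => c * f x ^ ((2 : ℝ) / 3)) ≤ F ρ) ∧
      (∀ ρ : ℝ → ℝ, Measurable ρ → (∀ᵐ x ∂(volume.restrict (Set.Icc a b)), 0 < ρ x) →
        (∫⁻ x in Set.Icc a b, ENNReal.ofReal (ρ x)) = 1 →
        F ρ = F (fun x => c * f x ^ ((2 : ℝ) / 3)) →
        ∀ᵐ x ∂(volume.restrict (Set.Icc a b)), ρ x = c * f x ^ ((2 : ℝ) / 3)) := by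
  set μ := volume.restrict (Set.Icc a b) with hμ
  set g : ℝ → ℝ := fun x => f x ^ ((2:ℝ)/3) with hg
  set I : ℝ := ∫ x in Set.Icc a b, f x ^ ((2:ℝ)/3) with hI
  have hIpos : 0 < I := hpos
  have hc0 : 0 < c := by rw [hc]; exact inv_pos.2 hpos
  -- measurability and integrability of g
  have hgm : AEStronglyMeasurable g μ :=
    (Real.continuous_rpow_const (by norm_num : (0:ℝ) ≤ 2/3)).comp_aestronglyMeasurable
      hf.aestronglyMeasurable
  have hg_int : Integrable g μ := by
    have h1 : Integrable (fun x => f x ^ 2 + 1) μ :=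
      hf.integrable_sq.add (integrableOn_const (measure_Icc_lt_top.ne))
    refine Integrable.mono h1 hgm (ae_of_all _ fun x => ?_)
    have hb1 : |f x ^ ((2:ℝ)/3)| ≤ |f x| ^ ((2:ℝ)/3) := Real.abs_rpow_le_abs_rpow _ _
    have hb2 : |f x| ^ ((2:ℝ)/3) ≤ f x ^ 2 + 1 := by
      rcases le_or_gt (|f x|) 1 with h | h
      · have := Real.rpow_le_one (abs_nonneg _) h (by norm_num : (0:ℝ) ≤ 2/3)
        nlinarith [sq_nonneg (f x)]
      · have h2 : |f x| ^ ((2:ℝ)/3) ≤ |f x| ^ ((2:ℝ)) :=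
          Real.rpow_le_rpow_of_exponent_le h.le (by norm_num)
        have h3 : |f x| ^ ((2:ℝ)) = f x ^ 2 := by
          rw [show ((2:ℝ)) = ((2:ℕ):ℝ) by norm_num, Real.rpow_natCast, sq_abs]
        nlinarith
    calc ‖g x‖ = |f x ^ ((2:ℝ)/3)| := by rw [Real.norm_eq_abs]
    _ ≤ f x ^ 2 + 1 := le_trans hb1 hb2
    _ ≤ ‖f x ^ 2 + 1‖ := le_abs_self _
  have hg0 : 0 ≤ᵐ[μ] g := hf0.mono fun x hx => Real.rpow_nonneg hx _
  have hρs_int : Integrable (fun x => c * g x) μ := hg_int.const_mul c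
  have hρs0 : 0 ≤ᵐ[μ] fun x => c * g x := hg0.mono fun x hx => mul_nonneg hc0.le hx
  -- Part 1: admissibility
  have part1 : ∫⁻ x in Set.Icc a b, ENNReal.ofReal (c * f x ^ ((2:ℝ)/3)) = 1 := by
    rw [← ofReal_integral_eq_lintegral_ofReal hρs_int hρs0, integral_const_mul, ← hI, hc,
      inv_mul_cancel₀ hIpos.ne', ENNReal.ofReal_one]
  -- key value of the lintegral for ρ*
  have hkey : ∫⁻ x in Set.Icc a b, ENNReal.ofReal (f x ^ 2 / (c * f x ^ ((2:ℝ)/3)) ^ 2)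
      = ENNReal.ofReal (I ^ 3) := by
    have hae : ∀ᵐ x ∂μ, ENNReal.ofReal (f x ^ 2 / (c * f x ^ ((2:ℝ)/3)) ^ 2)
        = ENNReal.ofReal (I ^ 2 * g x) := by
      filter_upwards [hf0] with x hx
      rcases hx.eq_or_lt with h | h
      · rw [hg]; simp [← h, Real.zero_rpow (by norm_num : ((2:ℝ)/3) ≠ 0)]
      · congr 1
        have hgx : 0 < g x := Real.rpow_pos_of_pos h _
        have hsq : (g x) ^ (2:ℕ) = f x ^ ((4:ℝ)/3) := by
          rw [hg, ← Real.rpow_natCast (f x ^ ((2:ℝ)/3)) 2, ← Real.rpow_mul h.le]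
          norm_num
        have hdiv : f x ^ ((2:ℝ)) / f x ^ ((4:ℝ)/3) = g x := by
          rw [← Real.rpow_sub h]; norm_num [hg]
        have h2 : f x ^ (2:ℕ) = f x ^ ((2:ℝ)) := by
          rw [← Real.rpow_natCast (f x) 2]; norm_num
        calc f x ^ 2 / (c * g x) ^ 2 = (f x ^ ((2:ℝ)) / f x ^ ((4:ℝ)/3)) / c ^ 2 := by
              rw [mul_pow, hsq, h2]; ring
        _ = g x / c ^ 2 := by rw [hdiv]
        _ = I ^ 2 * g x := by rw [hc]; field_simp
    rw [lintegral_congr_ae hae,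
      ← ofReal_integral_eq_lintegral_ofReal (hg_int.const_mul _)
        (hg0.mono fun x hx => mul_nonneg (by positivity) hx),
      integral_const_mul, ← hI]
    exact congrArg ENNReal.ofReal (by ring)
  -- Part 2: the value of F at ρ*
  have part2 : F (fun x => c * f x ^ ((2:ℝ)/3))
      = ENNReal.ofReal ((1/12) * I ^ 3) := by
    simp only [hF]
    rw [hkey, ENNReal.ofReal_mul (by norm_num : (0:ℝ) ≤ 1/12)]
    congr 1
    rw [ENNReal.ofReal_div_of_pos (by norm_num)]
    norm_num
  -- Part 3: minimality
  have part3 : ∀ ρ : ℝ → ℝ, Measurable ρ → (∀ᵐ x ∂μ, 0 < ρ x) →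
      (∫⁻ x in Set.Icc a b, ENNReal.ofReal (ρ x)) = 1 →
      ENNReal.ofReal (I ^ 3) ≤ ∫⁻ x in Set.Icc a b, ENNReal.ofReal (f x ^ 2 / ρ x ^ 2) := by
    intro ρ hρm hρ0 hρ1
    have hineq : ∀ᵐ x ∂μ, ENNReal.ofReal (3 * I ^ 2 * g x)
        ≤ ENNReal.ofReal (f x ^ 2 / ρ x ^ 2) + ENNReal.ofReal (2 * I ^ 3 * ρ x) := by
      filter_upwards [hf0, hρ0] with x hx hρx
      rw [← ENNReal.ofReal_add (by positivity) (by positivity)]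
      exact ENNReal.ofReal_le_ofReal (aux_ineq I (f x) (ρ x) hIpos hx hρx)
    have hlhs : ∫⁻ x in Set.Icc a b, ENNReal.ofReal (3 * I ^ 2 * g x)
        = ENNReal.ofReal (3 * I ^ 3) := by
      rw [← ofReal_integral_eq_lintegral_ofReal (hg_int.const_mul _)
        (hg0.mono fun x hx => mul_nonneg (by positivity) hx), integral_const_mul, ← hI]
      congr 1; ring
    have hrhs : ∫⁻ x in Set.Icc a b, ENNReal.ofReal (2 * I ^ 3 * ρ x)
        = ENNReal.ofReal (2 * I ^ 3) := by
      have : ∀ x, ENNReal.ofReal (2 * I ^ 3 * ρ x)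
          = ENNReal.ofReal (2 * I ^ 3) * ENNReal.ofReal (ρ x) := fun x =>
        ENNReal.ofReal_mul (by positivity)
      simp only [this]
      rw [lintegral_const_mul _ hρm.ennreal_ofReal, hρ1, mul_one]
    have hl : ENNReal.ofReal (3 * I ^ 3)
        ≤ (∫⁻ x in Set.Icc a b, ENNReal.ofReal (f x ^ 2 / ρ x ^ 2))
          + ENNReal.ofReal (2 * I ^ 3) := by
      calc ENNReal.ofReal (3 * I ^ 3)
          = ∫⁻ x in Set.Icc a b, ENNReal.ofReal (3 * I ^ 2 * g x) := hlhs.symm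
        _ ≤ ∫⁻ x in Set.Icc a b,
              (ENNReal.ofReal (f x ^ 2 / ρ x ^ 2) + ENNReal.ofReal (2 * I ^ 3 * ρ x)) :=
            lintegral_mono_ae hineq
        _ = (∫⁻ x in Set.Icc a b, ENNReal.ofReal (f x ^ 2 / ρ x ^ 2))
              + ∫⁻ x in Set.Icc a b, ENNReal.ofReal (2 * I ^ 3 * ρ x) :=
            lintegral_add_right' _ ((hρm.const_mul _).ennreal_ofReal.aemeasurable)
        _ = _ := by rw [hrhs]
    have h3 : ENNReal.ofReal (3 * I ^ 3)
        = ENNReal.ofReal (I ^ 3) + ENNReal.ofReal (2 * I ^ 3) := by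
      rw [← ENNReal.ofReal_add (by positivity) (by positivity)]; congr 1; ring
    rw [h3] at hl
    exact (ENNReal.add_le_add_iff_right ENNReal.ofReal_ne_top).1 hl
  refine ⟨part1, part2, fun ρ hρm hρ0 hρ1 => ?_, fun ρ hρm hρ0 hρ1 heq => ?_⟩
  · simp only [hF]
    rw [hkey]
    exact mul_le_mul_right (part3 ρ hρm hρ0 hρ1) _
  · -- uniqueness
    have hX : ∫⁻ x in Set.Icc a b, ENNReal.ofReal (f x ^ 2 / ρ x ^ 2)
        = ENNReal.ofReal (I ^ 3) := by
      simp only [hF] at heq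
      rw [hkey] at heq
      exact (ENNReal.mul_right_inj (by norm_num) (by norm_num)).1 heq
    set q : ℝ → ℝ := fun x => f x ^ 2 / ρ x ^ 2 with hq
    have hq0 : ∀ x, 0 ≤ q x := fun x => div_nonneg (sq_nonneg _) (sq_nonneg _)
    have hqm : AEStronglyMeasurable q μ :=
      ((hf.aestronglyMeasurable.aemeasurable.pow_const 2).div
        ((hρm.pow_const 2).aemeasurable)).aestronglyMeasurable
    have hq_int : Integrable q μ :=
      ⟨hqm, (hasFiniteIntegral_iff_ofReal (ae_of_all _ hq0)).2
        (by rw [hμ, hX]; exact ENNReal.ofReal_lt_top)⟩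
    have hq_val : ∫ x, q x ∂μ = I ^ 3 := by
      have h := ofReal_integral_eq_lintegral_ofReal hq_int (ae_of_all _ hq0)
      rw [hμ] at h
      rw [hX] at h
      exact (ENNReal.ofReal_eq_ofReal_iff (integral_nonneg hq0) (by positivity)).1 h
    have hρ_int : Integrable ρ μ :=
      ⟨hρm.aestronglyMeasurable, (hasFiniteIntegral_iff_ofReal
        (hρ0.mono fun x hx => hx.le)).2 (by rw [hμ, hρ1]; exact ENNReal.one_lt_top)⟩
    have hρ_val : ∫ x, ρ x ∂μ = 1 := by
      have h := ofReal_integral_eq_lintegral_ofReal hρ_int (hρ0.mono fun x hx => hx.le)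
      rw [hμ] at h
      rw [hρ1] at h
      have := (ENNReal.ofReal_eq_ofReal_iff
        (integral_nonneg_of_ae (hρ0.mono fun x hx => hx.le)) zero_le_one).1
        (by rw [h]; exact ENNReal.ofReal_one.symm ▸ rfl)
      exact this
    set h : ℝ → ℝ := fun x => q x + 2 * I ^ 3 * ρ x - 3 * I ^ 2 * g x with hh
    have h_int : Integrable h μ :=
      (hq_int.add (hρ_int.const_mul _)).sub (hg_int.const_mul _)
    have h_nonneg : 0 ≤ᵐ[μ] h := by
      filter_upwards [hf0, hρ0] with x hx hρx
      have := aux_ineq I (f x) (ρ x) hIpos hx hρx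
      simp only [hh, hq, hg, Pi.zero_apply]
      linarith
    have h_zero : ∫ x, h x ∂μ = 0 := by
      have i1 : Integrable (fun x => q x + 2 * I ^ 3 * ρ x) μ :=
        hq_int.add (hρ_int.const_mul _)
      have i2 : Integrable (fun x => 3 * I ^ 2 * g x) μ := hg_int.const_mul _
      have i3 : Integrable (fun x => 2 * I ^ 3 * ρ x) μ := hρ_int.const_mul _
      simp only [hh]
      rw [integral_sub i1 i2, integral_add hq_int i3]
      have e1 : ∫ x, 2 * I ^ 3 * ρ x ∂μ = 2 * I ^ 3 := by
        rw [integral_const_mul, hρ_val, mul_one]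
      have e2 : ∫ x, 3 * I ^ 2 * g x ∂μ = 3 * I ^ 3 := by
        rw [integral_const_mul]
        have : ∫ x, g x ∂μ = I := by rw [hμ, hg, hI]
        rw [this]; ring
      rw [hq_val, e1, e2]; ring
    have h_ae0 : h =ᵐ[μ] 0 := (integral_eq_zero_iff_of_nonneg_ae h_nonneg h_int).1 h_zero
    filter_upwards [hf0, hρ0, h_ae0] with x hx hρx hzx
    have hz : f x ^ 2 / ρ x ^ 2 + 2 * I ^ 3 * ρ x - 3 * I ^ 2 * f x ^ ((2:ℝ)/3) = 0 := by
      simpa [hh, hq, hg] using hzx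
    rw [hc]
    exact aux_eq I (f x) (ρ x) hIpos hx hρx hz
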